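/- arXiv:2011.04636 — 4 statements merged into one kernel-verified Lean document; each statement's English description precedes it below -/
import Mathlib

section
/- Structural non-identifiability of the parameter m2 (Sections S.7–S.8). Suppose (G, I, i1, i2, H, h1, ξ) is a solution of the bihormonal–glucose model (1)–(7) on an interval J with parameters (k1, kI, ki1, kH, rG, m1, m2, m3, m4, n, n1, n2, x1, x2, Ib, Hb, p, q). Then for every λ > 0, the functions (G, λ·I, i1, i2, H, h1, ξ) solve the bihormonal–glucose model (1)–(7) on J with the parameters obtained by replacing kI by kI/λ, Ib by λ·Ib, m2 by λ·m2 and x2 by x2/λ (all other parameters and inputs unchanged). In particular, this one-parameter family of distinct parameter sets produces exactly the same glucose output G. -/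
/-- Structural non-identifiability of the parameter `m2` (Sections S.7–S.8).
If `(G, I, i1, i2, H, h1, ξ)` solves the bihormonal–glucose model (1)–(7) on
`J`, then for every `λ > 0` the functions `(G, λ·I, i1, i2, H, h1, ξ)` solve
the model with `kI` replaced by `kI/λ`, `Ib` by `λ·Ib`, `m2` by `λ·m2` and
`x2` by `x2/λ`, producing exactly the same glucose output `G`. -/
theorem structural_nonidentifiability_m2
    (J : Set ℝ)
    (G I i1 i2 H h1 ξ RaG uI uH : ℝ → ℝ)
    (k1 kI ki1 kH rG m1 m2 m3 m4 n n1 n2 x1 x2 Ib Hb p q : ℝ)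
    (hi1pos : ∀ t ∈ J, 0 < i1 t)
    (hG : ∀ t ∈ J, HasDerivAt G
      (-(k1 + kI * (I t + Ib) + ki1 * i1 t) * G t + kH * (H t + Hb) * ξ t + rG * RaG t) t)
    (hI : ∀ t ∈ J, HasDerivAt I (-m1 * I t + m2 * i1 t ^ p) t)
    (hi1 : ∀ t ∈ J, HasDerivAt i1 (-m3 * i1 t ^ q + m4 * i2 t) t)
    (hi2 : ∀ t ∈ J, HasDerivAt i2 (-m4 * i2 t + uI t) t)
    (hH : ∀ t ∈ J, HasDerivAt H (-n * H t + n2 * h1 t) t)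
    (hh1 : ∀ t ∈ J, HasDerivAt h1 (-n1 * h1 t + uH t) t)
    (hξ : ∀ t ∈ J, HasDerivAt ξ (-x1 * H t * ξ t + x2 * G t * I t) t) :
    ∀ lam : ℝ, 0 < lam → ∀ t ∈ J,
      HasDerivAt G
        (-(k1 + (kI / lam) * (lam * I t + lam * Ib) + ki1 * i1 t) * G t
          + kH * (H t + Hb) * ξ t + rG * RaG t) t ∧
      HasDerivAt (fun s => lam * I s) (-m1 * (lam * I t) + (lam * m2) * i1 t ^ p) t ∧
      HasDerivAt i1 (-m3 * i1 t ^ q + m4 * i2 t) t ∧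
      HasDerivAt i2 (-m4 * i2 t + uI t) t ∧
      HasDerivAt H (-n * H t + n2 * h1 t) t ∧
      HasDerivAt h1 (-n1 * h1 t + uH t) t ∧
      HasDerivAt ξ (-x1 * H t * ξ t + (x2 / lam) * G t * (lam * I t)) t := by
  intro lam hlam t ht
  have hl : lam ≠ 0 := ne_of_gt hlam
  refine ⟨?_, ?_, hi1 t ht, hi2 t ht, hH t ht, hh1 t ht, ?_⟩
  · have := hG t ht
    convert this using 2
    field_simp
  · have : HasDerivAt (fun s => lam * I s) (lam * (-m1 * I t + m2 * i1 t ^ p)) t := (hI t ht).const_mul lam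
    convert this using 1
    ring
  · have := hξ t ht
    convert this using 2
    field_simp
end

section
/- Structural non-identifiability of the parameter n2 (Sections S.7–S.8). Suppose (G, I, i1, i2, H, h1, ξ) is a solution of the bihormonal–glucose model (1)–(7) on an interval J. Then for every μ > 0, the functions (G, I, i1, i2, μ·H, h1, ξ) solve the bihormonal–glucose model (1)–(7) on J with the parameters obtained by replacing kH by kH/μ, Hb by μ·Hb, n2 by μ·n2 and x1 by x1/μ (all other parameters and inputs unchanged). In particular, this one-parameter family of distinct parameter sets produces exactly the same glucose output G. -/
/-- Structural non-identifiability of the parameter `n2` (Sections S.7–S.8).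
If `(G, I, i1, i2, H, h1, ξ)` solves the bihormonal–glucose model (1)–(7) on
`J`, then for every `μ > 0` the functions `(G, I, i1, i2, μ·H, h1, ξ)` solve
the model with `kH` replaced by `kH/μ`, `Hb` by `μ·Hb`, `n2` by `μ·n2` and
`x1` by `x1/μ`, producing exactly the same glucose output `G`. -/
theorem structural_nonidentifiability_n2
    (J : Set ℝ)
    (G I i1 i2 H h1 ξ RaG uI uH : ℝ → ℝ)
    (k1 kI ki1 kH rG m1 m2 m3 m4 n n1 n2 x1 x2 Ib Hb p q : ℝ)
    (hi1pos : ∀ t ∈ J, 0 < i1 t)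
    (hG : ∀ t ∈ J, HasDerivAt G
      (-(k1 + kI * (I t + Ib) + ki1 * i1 t) * G t + kH * (H t + Hb) * ξ t + rG * RaG t) t)
    (hI : ∀ t ∈ J, HasDerivAt I (-m1 * I t + m2 * i1 t ^ p) t)
    (hi1 : ∀ t ∈ J, HasDerivAt i1 (-m3 * i1 t ^ q + m4 * i2 t) t)
    (hi2 : ∀ t ∈ J, HasDerivAt i2 (-m4 * i2 t + uI t) t)
    (hH : ∀ t ∈ J, HasDerivAt H (-n * H t + n2 * h1 t) t)
    (hh1 : ∀ t ∈ J, HasDerivAt h1 (-n1 * h1 t + uH t) t)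
    (hξ : ∀ t ∈ J, HasDerivAt ξ (-x1 * H t * ξ t + x2 * G t * I t) t) :
    ∀ μ : ℝ, 0 < μ → ∀ t ∈ J,
      HasDerivAt G
        (-(k1 + kI * (I t + Ib) + ki1 * i1 t) * G t
          + (kH / μ) * (μ * H t + μ * Hb) * ξ t + rG * RaG t) t ∧
      HasDerivAt I (-m1 * I t + m2 * i1 t ^ p) t ∧
      HasDerivAt i1 (-m3 * i1 t ^ q + m4 * i2 t) t ∧
      HasDerivAt i2 (-m4 * i2 t + uI t) t ∧
      HasDerivAt (fun s => μ * H s) (-n * (μ * H t) + (μ * n2) * h1 t) t ∧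
      HasDerivAt h1 (-n1 * h1 t + uH t) t ∧
      HasDerivAt ξ (-(x1 / μ) * (μ * H t) * ξ t + x2 * G t * I t) t := by
  intro μ hμ t ht
  have hμ' : μ ≠ 0 := ne_of_gt hμ
  refine ⟨?_, hI t ht, hi1 t ht, hi2 t ht, ?_, hh1 t ht, ?_⟩
  · have := hG t ht
    have e : (kH / μ) * (μ * H t + μ * Hb) = kH * (H t + Hb) := by
      field_simp
    rw [e]; exact this
  · have := (hH t ht).const_mul μ
    exact this.congr_deriv (by ring)
  · have := hξ t ht
    have e : -(x1 / μ) * (μ * H t) = -x1 * H t := by field_simp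
    rw [e]; exact this
end

section
/- Nontrivial null-space of the Jacobi matrix in the parameters (m1, m2, n, n2, x1, x2) (Section S.7.1). Let x = (G, I, i1, i2, H, h1, ξ) ∈ ℝ^7 with G ≠ 0, I ≠ 0, i1 > 0, H ≠ 0, h1 ≠ 0, ξ ≠ 0. Consider the row vector j = (I·kI·G, −i1^p·kI·G, −H·kH·ξ, h1·kH·ξ, −H·ξ·kH·(H + Hb), G·I·kH·(H + Hb)) of partial derivatives of the second Lie derivative Ψ with respect to (m1, m2, n, n2, x1, x2). Then each of the three vectors v1 = (1/I, 1/i1^p, 0, 0, 0, 0), v2 = (0, 0, 1/H, 1/h1, 0, 0), v3 = (0, 0, 0, 0, 1/(H·ξ), 1/(G·I)) satisfies j · v = 0. Moreover the functions L_{f0}h(x) = −K(x)·G + kH·(H + Hb)·ξ and L_{f1}L_{f0}h(x) = −rG·K(x) do not depend on (m1, m2, n, n2, x1, x2), so their parameter-gradients with respect to these six parameters vanish; hence the Jacobi matrix whose rows are the gradients of L_{f0}h, L_{f0}L_{f0}h and L_{f1}L_{f0}h with respect to (m1, m2, n, n2, x1, x2) has a nontrivial null space containing v1, v2 and v3. 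-/
/-- Nontrivial null-space of the Jacobi matrix in the parameters
`(m1, m2, n, n2, x1, x2)` (Section S.7.1). With a state
`(G, I, i1, i2, H, h1, ξ)` whose relevant coordinates are nonzero, the row
vector `j` of partial derivatives of the second Lie derivative `Ψ` with
respect to `(m1, m2, n, n2, x1, x2)` annihilates the three vectors
`v1, v2, v3`. Moreover `L_{f0}h` and `L_{f1}L_{f0}h` do not depend on these
six parameters (their parameter-gradients vanish identically), hence the
Jacobi matrix with rows the gradients of `L_{f0}h`, `L_{f0}L_{f0}h` and
`L_{f1}L_{f0}h` has a nontrivial null space containing `v1`, `v2`, `v3`. -/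
theorem jacobi_nullspace_six_parameters
    (k1 kI ki1 kH rG m3 m4 Ib Hb p q : ℝ)
    (G I i1 i2 H h1 ξ : ℝ)
    (hG : G ≠ 0) (hI : I ≠ 0) (hi1 : 0 < i1) (hH : H ≠ 0) (hh1 : h1 ≠ 0)
    (hξ : ξ ≠ 0)
    (j v1 v2 v3 : Fin 6 → ℝ)
    (hj : j = ![I * kI * G, -(i1 ^ p) * kI * G, -H * kH * ξ, h1 * kH * ξ,
      -H * ξ * kH * (H + Hb), G * I * kH * (H + Hb)])
    (hv1 : v1 = ![1 / I, 1 / i1 ^ p, 0, 0, 0, 0])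
    (hv2 : v2 = ![0, 0, 1 / H, 1 / h1, 0, 0])
    (hv3 : v3 = ![0, 0, 0, 0, 1 / (H * ξ), 1 / (G * I)]) :
    (∑ i, j i * v1 i = 0) ∧ (∑ i, j i * v2 i = 0) ∧ (∑ i, j i * v3 i = 0) ∧
    -- `L_{f0}h` and `L_{f1}L_{f0}h` do not depend on the six parameters:
    -- their gradients with respect to `(m1, m2, n, n2, x1, x2)` vanish.
    (∀ θ : Fin 6 → ℝ,
      fderiv ℝ (fun _ : Fin 6 → ℝ =>
        -(k1 + kI * (I + Ib) + ki1 * i1) * G + kH * (H + Hb) * ξ) θ = 0) ∧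
    (∀ θ : Fin 6 → ℝ,
      fderiv ℝ (fun _ : Fin 6 → ℝ =>
        -rG * (k1 + kI * (I + Ib) + ki1 * i1)) θ = 0) ∧
    -- the Jacobi matrix has rows `0`, `j`, `0`, and `v1, v2, v3` lie in its
    -- (nontrivial) null space.
    v1 ≠ 0 ∧ v2 ≠ 0 ∧ v3 ≠ 0 ∧
    (Matrix.of ![(0 : Fin 6 → ℝ), j, 0]).mulVec v1 = 0 ∧
    (Matrix.of ![(0 : Fin 6 → ℝ), j, 0]).mulVec v2 = 0 ∧
    (Matrix.of ![(0 : Fin 6 → ℝ), j, 0]).mulVec v3 = 0 := by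
  have h5 : ∀ (a b c d e f : ℝ), (![a,b,c,d,e,f] : Fin 6 → ℝ) 5 = f := fun _ _ _ _ _ _ => rfl
  have hi1p : (i1:ℝ) ^ p ≠ 0 := by positivity
  subst hj hv1 hv2 hv3
  have hsum1 : (∑ i, (![I * kI * G, -(i1 ^ p) * kI * G, -H * kH * ξ, h1 * kH * ξ,
      -H * ξ * kH * (H + Hb), G * I * kH * (H + Hb)] : Fin 6 → ℝ) i *
      (![1 / I, 1 / i1 ^ p, 0, 0, 0, 0] : Fin 6 → ℝ) i) = 0 := by
    simp [Fin.sum_univ_six, Matrix.cons_val_succ, h5]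
    field_simp
    ring
  have hsum2 : (∑ i, (![I * kI * G, -(i1 ^ p) * kI * G, -H * kH * ξ, h1 * kH * ξ,
      -H * ξ * kH * (H + Hb), G * I * kH * (H + Hb)] : Fin 6 → ℝ) i *
      (![0, 0, 1 / H, 1 / h1, 0, 0] : Fin 6 → ℝ) i) = 0 := by
    simp [Fin.sum_univ_six, Matrix.cons_val_succ, h5]
    field_simp
    ring
  have hsum3 : (∑ i, (![I * kI * G, -(i1 ^ p) * kI * G, -H * kH * ξ, h1 * kH * ξ,
      -H * ξ * kH * (H + Hb), G * I * kH * (H + Hb)] : Fin 6 → ℝ) i *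
      (![0, 0, 0, 0, 1 / (H * ξ), 1 / (G * I)] : Fin 6 → ℝ) i) = 0 := by
    simp [Fin.sum_univ_six, Matrix.cons_val_succ, h5]
    field_simp
    ring
  refine ⟨hsum1, hsum2, hsum3, ?_, ?_, ?_, ?_, ?_, ?_, ?_, ?_⟩
  · intro θ; exact fderiv_const_apply _
  · intro θ; exact fderiv_const_apply _
  · intro h
    have := congrFun h 0
    simp at this
    exact hI (by simpa using this)
  · intro h
    have := congrFun h 2
    simp at this
    exact hH (by simpa using this)
  · intro h
    have := congrFun h 4
    simp at this
    exact hH (by simp_all)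
  all_goals
    funext i
    fin_cases i <;>
      simp [Matrix.mulVec, dotProduct, Fin.sum_univ_six, Matrix.cons_val_succ, h5] <;>
      field_simp <;> ring
end

section
/- Nontrivial null-space of the extended Jacobi matrix in the parameters (kI, ki1, m1, m2, n, n2, x1, x2) (Section S.7.3). Let x = (G, I, i1, i2, H, h1, ξ) ∈ ℝ^7 with G ≠ 0, I ≠ 0, i1 > 0, H ≠ 0, h1 ≠ 0, ξ ≠ 0. Let r1, r2, r3 ∈ ℝ^8 be respectively the gradients of φ, Ψ and −rG·K with respect to the eight parameters θ = (kI, ki1, m1, m2, n, n2, x1, x2) evaluated at these values. Then each of the three vectors w1 = (0, 0, 1/I, 1/i1^p, 0, 0, 0, 0), w2 = (0, 0, 0, 0, 1/H, 1/h1, 0, 0), w3 = (0, 0, 0, 0, 0, 0, 1/(H·ξ), 1/(G·I)) satisfies r1 · w = r2 · w = r3 · w = 0; hence the matrix with rows r1, r2, r3 has a nontrivial null space. -/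
set_option maxHeartbeats 1600000 in
/-- Nontrivial null-space of the extended Jacobi matrix in the parameters
`(kI, ki1, m1, m2, n, n2, x1, x2)` (Section S.7.3). The rows `r1, r2, r3` of
the Jacobi matrix are the gradients of `φ`, `Ψ` and `−rG·K` with respect to
the parameter vector `θ = (kI, ki1, m1, m2, n, n2, x1, x2)`; applying each of
these gradients (Fréchet derivatives) to the vectors `w1, w2, w3` gives zero,
and the `w`'s are nonzero, hence the matrix with rows `r1, r2, r3` has a
nontrivial null space. -/
theorem extended_jacobi_nullspace_eight_parameters
    (k1 kI ki1 kH rG m1 m2 m3 m4 n n2 x1 x2 Ib Hb p q : ℝ)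
    (G I i1 i2 H h1 ξ : ℝ)
    (hG : G ≠ 0) (hI : I ≠ 0) (hi1 : 0 < i1) (hH : H ≠ 0) (hh1 : h1 ≠ 0)
    (hξ : ξ ≠ 0)
    (Φ Ψ M : (Fin 8 → ℝ) → ℝ)
    (hΦ : Φ = fun θ : Fin 8 → ℝ =>
      -(k1 + θ 0 * (I + Ib) + θ 1 * i1) * G + kH * (H + Hb) * ξ)
    (hΨ : Ψ = fun θ : Fin 8 → ℝ =>
      Φ θ * (-(k1 + θ 0 * (I + Ib) + θ 1 * i1))
      + (-(θ 2) * I + θ 3 * i1 ^ p) * (-(θ 0 * G))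
      + (-m3 * i1 ^ q + m4 * i2) * (-(θ 1 * G))
      + (-(θ 4) * H + θ 5 * h1) * (kH * ξ)
      + (-(θ 6) * H * ξ + θ 7 * G * I) * (kH * (H + Hb)))
    (hM : M = fun θ : Fin 8 → ℝ =>
      -rG * (k1 + θ 0 * (I + Ib) + θ 1 * i1))
    (θ₀ w1 w2 w3 : Fin 8 → ℝ)
    (hθ₀ : θ₀ = ![kI, ki1, m1, m2, n, n2, x1, x2])
    (hw1 : w1 = ![0, 0, 1 / I, 1 / i1 ^ p, 0, 0, 0, 0])
    (hw2 : w2 = ![0, 0, 0, 0, 1 / H, 1 / h1, 0, 0])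
    (hw3 : w3 = ![0, 0, 0, 0, 0, 0, 1 / (H * ξ), 1 / (G * I)]) :
    (fderiv ℝ Φ θ₀ w1 = 0 ∧ fderiv ℝ Ψ θ₀ w1 = 0 ∧ fderiv ℝ M θ₀ w1 = 0) ∧
    (fderiv ℝ Φ θ₀ w2 = 0 ∧ fderiv ℝ Ψ θ₀ w2 = 0 ∧ fderiv ℝ M θ₀ w2 = 0) ∧
    (fderiv ℝ Φ θ₀ w3 = 0 ∧ fderiv ℝ Ψ θ₀ w3 = 0 ∧ fderiv ℝ M θ₀ w3 = 0) ∧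
    w1 ≠ 0 ∧ w2 ≠ 0 ∧ w3 ≠ 0 := by
  have hip : i1 ^ p ≠ 0 := (Real.rpow_pos_of_pos hi1 p).ne'
  subst hΨ hΦ hM hθ₀ hw1 hw2 hw3
  set θ₀ : Fin 8 → ℝ := ![kI, ki1, m1, m2, n, n2, x1, x2] with hθ
  have hproj : ∀ i : Fin 8, HasFDerivAt (fun θ : Fin 8 → ℝ => θ i)
      (ContinuousLinearMap.proj (R := ℝ) (φ := fun _ : Fin 8 => ℝ) i) θ₀ :=
    fun i => hasFDerivAt_apply i θ₀
  have hK : HasFDerivAt (fun θ : Fin 8 → ℝ => k1 + θ 0 * (I + Ib) + θ 1 * i1)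
      _ θ₀ :=
    ((hasFDerivAt_const k1 θ₀).add ((hproj 0).mul_const (I + Ib))).add
      ((hproj 1).mul_const i1)
  have hΦd : HasFDerivAt (fun θ : Fin 8 → ℝ =>
      -(k1 + θ 0 * (I + Ib) + θ 1 * i1) * G + kH * (H + Hb) * ξ) _ θ₀ :=
    (hK.neg.mul_const G).add_const (kH * (H + Hb) * ξ)
  have hT1 := hΦd.mul hK.neg
  have hT2 := ((((hproj 2).neg.mul_const I).add
      ((hproj 3).mul_const (i1 ^ p))).mul ((hproj 0).mul_const G).neg)
  have hT3 := (((hproj 1).mul_const G).neg).const_mul (-m3 * i1 ^ q + m4 * i2)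
  have hT4 := ((((hproj 4).neg.mul_const H).add
      ((hproj 5).mul_const h1)).mul_const (kH * ξ))
  have hT5 := (((((hproj 6).neg.mul_const H).mul_const ξ).add
      (((hproj 7).mul_const G).mul_const I)).mul_const (kH * (H + Hb)))
  have hΨd : HasFDerivAt (fun θ : Fin 8 → ℝ =>
      (-(k1 + θ 0 * (I + Ib) + θ 1 * i1) * G + kH * (H + Hb) * ξ) * (-(k1 + θ 0 * (I + Ib) + θ 1 * i1))
      + (-(θ 2) * I + θ 3 * i1 ^ p) * (-(θ 0 * G))
      + (-m3 * i1 ^ q + m4 * i2) * (-(θ 1 * G))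
      + (-(θ 4) * H + θ 5 * h1) * (kH * ξ)
      + (-(θ 6) * H * ξ + θ 7 * G * I) * (kH * (H + Hb))) _ θ₀ :=
    ((((hT1.add hT2).add hT3).add hT4).add hT5 :)
  have hMd := hK.const_mul (-rG)
  have eΦ := hΦd.fderiv
  have eΨ := hΨd.fderiv
  have eM := hMd.fderiv
  refine ⟨⟨?_, ?_, ?_⟩, ⟨?_, ?_, ?_⟩, ⟨?_, ?_, ?_⟩, ?_, ?_, ?_⟩
  · rw [eΦ]; simp
  · rw [eΨ]; simp
    norm_num [show ((![0,0,I⁻¹,(i1^p)⁻¹,0,0,0,0] : Fin 8 → ℝ) 5 : ℝ) = 0 from rfl,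
      show ((![0,0,I⁻¹,(i1^p)⁻¹,0,0,0,0] : Fin 8 → ℝ) 6 : ℝ) = 0 from rfl,
      show ((![0,0,I⁻¹,(i1^p)⁻¹,0,0,0,0] : Fin 8 → ℝ) 7 : ℝ) = 0 from rfl,
      mul_inv_cancel₀ hI, mul_inv_cancel₀ hip]
  · rw [eM]; simp
  · rw [eΦ]; simp
  · rw [eΨ]; simp
    norm_num [show ((![0,0,0,0,H⁻¹,h1⁻¹,0,0] : Fin 8 → ℝ) 5 : ℝ) = h1⁻¹ from rfl,
      show ((![0,0,0,0,H⁻¹,h1⁻¹,0,0] : Fin 8 → ℝ) 6 : ℝ) = 0 from rfl,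
      show ((![0,0,0,0,H⁻¹,h1⁻¹,0,0] : Fin 8 → ℝ) 7 : ℝ) = 0 from rfl,
      mul_inv_cancel₀ hH, mul_inv_cancel₀ hh1]
  · rw [eM]; simp
  · rw [eΦ]; simp
  · rw [eΨ]; simp
    norm_num [show ((![0,0,0,0,0,0,ξ⁻¹*H⁻¹,I⁻¹*G⁻¹] : Fin 8 → ℝ) 5 : ℝ) = 0 from rfl,
      show ((![0,0,0,0,0,0,ξ⁻¹*H⁻¹,I⁻¹*G⁻¹] : Fin 8 → ℝ) 6 : ℝ) = ξ⁻¹*H⁻¹ from rfl,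
      show ((![0,0,0,0,0,0,ξ⁻¹*H⁻¹,I⁻¹*G⁻¹] : Fin 8 → ℝ) 7 : ℝ) = I⁻¹*G⁻¹ from rfl]
    field_simp
    ring
  · rw [eM]; simp
  · intro h
    have h2 : (1 : ℝ) / I = 0 := congrFun h 2
    rw [div_eq_zero_iff] at h2
    exact hI (h2.resolve_left one_ne_zero)
  · intro h
    have h4 : (1 : ℝ) / H = 0 := congrFun h 4
    rw [div_eq_zero_iff] at h4
    exact hH (h4.resolve_left one_ne_zero)
  · intro h
    have h6 : (1 : ℝ) / (H * ξ) = 0 := congrFun h 6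
    rw [div_eq_zero_iff] at h6
    exact mul_ne_zero hH hξ (h6.resolve_left one_ne_zero)
end
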